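/- (Weak type (1,1) for the admissible maximal function.) Let a > 0. There exists a constant C, depending only on a and the dimension n, such that for all f ∈ L¹(γ) and all τ > 0, τ · γ({x ∈ ℝⁿ : M*_a f(x) > τ}) ≤ C ‖f‖_{L¹(γ)}. -/

import Mathlib

open MeasureTheory Metric Set
open scoped ENNReal NNReal BigOperators

noncomputable section

/-- The gaussian measure `dγ(x) = (2π)^{-n/2} exp(-|x|²/2) dx` on `ℝⁿ`. -/
def gaussMeasure (n : ℕ) : Measure (EuclideanSpace ℝ (Fin n)) :=
  volume.withDensity fun x =>
    ENNReal.ofReal ((2 * Real.pi) ^ (-(n : ℝ) / 2) * Real.exp (-‖x‖ ^ 2 / 2))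

/-- `m(x) = min {1, 1/‖x‖}`. -/
def mfun {n : ℕ} (x : EuclideanSpace ℝ (Fin n)) : ℝ :=
  if ‖x‖ ≤ 1 then 1 else ‖x‖⁻¹

/-- Ornstein–Uhlenbeck (Mehler) semigroup `e^{-tL} u (x)`. -/
def mehler (n : ℕ) (u : EuclideanSpace ℝ (Fin n) → ℝ) (t : ℝ)
    (x : EuclideanSpace ℝ (Fin n)) : ℝ :=
  ∫ y, u (Real.exp (-t) • x + Real.sqrt (1 - Real.exp (-2 * t)) • y) ∂gaussMeasure n

/-- The gaussian conical square function `S_a u (x)`. -/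
def Sfun (n : ℕ) (a : ℝ) (u : EuclideanSpace ℝ (Fin n) → ℝ)
    (x : EuclideanSpace ℝ (Fin n)) : ℝ≥0∞ :=
  (∫⁻ t in Set.Ioo (0 : ℝ) (a * mfun x),
      (∫⁻ y in ball x t,
        (gaussMeasure n (ball y t))⁻¹ *
          ENNReal.ofReal ((t * ‖fderiv ℝ (mehler n u (t ^ 2)) y‖) ^ 2) ∂gaussMeasure n) /
        ENNReal.ofReal t) ^ (1 / 2 : ℝ)

/-- The gaussian non-tangential maximal function `T*_{(A,a)} u (x)`. -/
def Tstar (n : ℕ) (A a : ℝ) (u : EuclideanSpace ℝ (Fin n) → ℝ)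
    (x : EuclideanSpace ℝ (Fin n)) : ℝ≥0∞ :=
  ⨆ (y : EuclideanSpace ℝ (Fin n)) (t : ℝ) (_ : dist y x < A * t) (_ : 0 < t)
      (_ : t < a * mfun x),
    ((gaussMeasure n (ball y (A * t)))⁻¹ *
        ∫⁻ z in ball y (A * t), ENNReal.ofReal ((mehler n u (t ^ 2) z) ^ 2) ∂gaussMeasure n) ^
      (1 / 2 : ℝ)

/-- The admissible (gaussian) Hardy–Littlewood maximal function `M*_a f (x)`. -/
def Mstar (n : ℕ) (a : ℝ) (f : EuclideanSpace ℝ (Fin n) → ℝ)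
    (x : EuclideanSpace ℝ (Fin n)) : ℝ≥0∞ :=
  ⨆ (r : ℝ) (_ : 0 < r) (_ : r ≤ a * mfun x),
    (gaussMeasure n (ball x r))⁻¹ *
      ∫⁻ y in ball x r, ENNReal.ofReal |f y| ∂gaussMeasure n

/-- The admissible cone `Γ^{(A,a)}_x(γ)`. -/
def cone (n : ℕ) (A a : ℝ) (x : EuclideanSpace ℝ (Fin n)) :
    Set (EuclideanSpace ℝ (Fin n) × ℝ) :=
  {p | dist p.1 x < A * p.2 ∧ 0 < p.2 ∧ p.2 < a * mfun x}

/-- The modified admissible cone `Γ̃^{(A,a)}_x(γ)`. -/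
def coneT (n : ℕ) (A a : ℝ) (x : EuclideanSpace ℝ (Fin n)) :
    Set (EuclideanSpace ℝ (Fin n) × ℝ) :=
  {p | dist p.1 x < A * p.2 ∧ 0 < p.2 ∧ p.2 < a * mfun p.1}

/-- The dyadic cube `2^{-k}(v + [0,1)ⁿ)` of scale `k`. -/
def dyadicCube (n k : ℕ) (v : Fin n → ℤ) : Set (EuclideanSpace ℝ (Fin n)) :=
  {x | ∀ i, x i ∈ Set.Ico ((2 : ℝ) ^ (-(k : ℤ)) * v i) ((2 : ℝ) ^ (-(k : ℤ)) * (v i + 1))}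

/-- The centre of the dyadic cube `2^{-k}(v + [0,1)ⁿ)`. -/
def cubeCenter (n k : ℕ) (v : Fin n → ℤ) : EuclideanSpace ℝ (Fin n) :=
  WithLp.toLp 2 (fun i => (2 : ℝ) ^ (-(k : ℤ)) * (v i + 1 / 2))

/-- The layers `L_0 = [-1,1)ⁿ`, `L_l = [-2^l,2^l)ⁿ \ [-2^{l-1},2^{l-1})ⁿ`. -/
def layer (n : ℕ) : ℕ → Set (EuclideanSpace ℝ (Fin n))
  | 0 => {x | ∀ i, x i ∈ Set.Ico (-1 : ℝ) 1}
  | (l + 1) =>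
      {x | ∀ i, x i ∈ Set.Ico (-(2 : ℝ) ^ (l + 1)) ((2 : ℝ) ^ (l + 1))} \
        {x | ∀ i, x i ∈ Set.Ico (-(2 : ℝ) ^ l) ((2 : ℝ) ^ l)}

/-- The cube `α ∘ Q` with the same centre as `Q = 2^{-k}(v + [0,1)ⁿ)` and `α` times
its side-length. -/
def scaledCube (n k : ℕ) (v : Fin n → ℤ) (α : ℝ) : Set (EuclideanSpace ℝ (Fin n)) :=
  {x | ∀ i, x i ∈ Set.Ico (cubeCenter n k v i - α * (2 : ℝ) ^ (-(k : ℤ)) / 2)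
      (cubeCenter n k v i + α * (2 : ℝ) ^ (-(k : ℤ)) / 2)}

/-- The Ornstein–Uhlenbeck operator `Lf(x) = -Δf(x) + x·∇f(x)`. -/
def OU (n : ℕ) (f : EuclideanSpace ℝ (Fin n) → ℂ) (x : EuclideanSpace ℝ (Fin n)) : ℂ :=
  -(∑ i : Fin n, iteratedFDeriv ℝ 2 f x ![EuclideanSpace.single i 1, EuclideanSpace.single i 1]) +
    fderiv ℝ f x x


lemma mfun_le_one {n : ℕ} (x : EuclideanSpace ℝ (Fin n)) : mfun x ≤ 1 := by
  unfold mfun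
  split_ifs with h
  · exact le_rfl
  · exact inv_le_one_of_one_le₀ (le_of_not_ge h)

lemma gauss_ball_lt_top (n : ℕ) (x : EuclideanSpace ℝ (Fin n)) (r : ℝ) :
    gaussMeasure n (ball x r) < ∞ := by
  rw [gaussMeasure, withDensity_apply _ measurableSet_ball]
  calc ∫⁻ y in ball x r,
        ENNReal.ofReal ((2 * Real.pi) ^ (-(n : ℝ) / 2) * Real.exp (-‖y‖ ^ 2 / 2)) ∂volume
      ≤ ∫⁻ _ in ball x r, ENNReal.ofReal ((2 * Real.pi) ^ (-(n : ℝ) / 2)) ∂volume := by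
        refine lintegral_mono fun y => ENNReal.ofReal_le_ofReal ?_
        have h1 : Real.exp (-‖y‖ ^ 2 / 2) ≤ 1 := by
          rw [Real.exp_le_one_iff]
          nlinarith [sq_nonneg ‖y‖]
        have h2 : (0 : ℝ) ≤ (2 * Real.pi) ^ (-(n : ℝ) / 2) :=
          Real.rpow_nonneg (by positivity) _
        nlinarith
    _ = ENNReal.ofReal ((2 * Real.pi) ^ (-(n : ℝ) / 2)) * volume (ball x r) := by
        rw [setLIntegral_const]
    _ < ∞ := ENNReal.mul_lt_top ENNReal.ofReal_lt_top measure_ball_lt_top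

/-- weak type `(1,1)` bound for the admissible maximal function `M*_a`. -/
theorem Mstar_weak_type (n : ℕ) (a : ℝ) (ha : 0 < a) :
    ∃ C > (0 : ℝ), ∀ f : EuclideanSpace ℝ (Fin n) → ℝ, Integrable f (gaussMeasure n) →
      ∀ τ > (0 : ℝ),
        ENNReal.ofReal τ * gaussMeasure n {x | ENNReal.ofReal τ < Mstar n a f x} ≤
          ENNReal.ofReal (C * ∫ x, |f x| ∂gaussMeasure n) := by
  obtain ⟨N, τ₀, hτ₀, hSC⟩ :=
    HasBesicovitchCovering.no_satelliteConfig (α := EuclideanSpace ℝ (Fin n))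
  refine ⟨N + 1, by positivity, fun f hf τ hτ => ?_⟩
  set γ := gaussMeasure n with hγ
  set E : Set (EuclideanSpace ℝ (Fin n)) := {x | ENNReal.ofReal τ < Mstar n a f x} with hE
  -- the total mass of |f|
  set I : ℝ≥0∞ := ∫⁻ y, ENNReal.ofReal |f y| ∂γ with hI
  have hI_eq : I = ENNReal.ofReal (∫ x, |f x| ∂γ) := by
    rw [ofReal_integral_eq_lintegral_ofReal hf.abs
      (Filter.Eventually.of_forall fun y => abs_nonneg _)]
  -- choose good radii on E
  have key : ∀ x : E, ∃ r : ℝ, 0 < r ∧ r ≤ a ∧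
      ENNReal.ofReal τ * γ (ball (x : EuclideanSpace ℝ (Fin n)) r) ≤
        ∫⁻ y in ball (x : EuclideanSpace ℝ (Fin n)) r, ENNReal.ofReal |f y| ∂γ := by
    rintro ⟨x, hx⟩
    simp only [hE, Set.mem_setOf_eq, Mstar, lt_iSup_iff] at hx
    obtain ⟨r, hr0, hra, hlt⟩ := hx
    refine ⟨r, hr0, hra.trans (by nlinarith [mfun_le_one x, ha.le]), ?_⟩
    by_cases hB0 : γ (ball x r) = 0
    · simp [hB0]
    · have hBt : γ (ball x r) ≠ ∞ := (gauss_ball_lt_top n x r).ne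
      rw [← ENNReal.div_eq_inv_mul] at hlt
      exact ((ENNReal.lt_div_iff_mul_lt (Or.inl hB0) (Or.inl hBt)).1 hlt).le
  choose r hr0 hra hrI using key
  -- Besicovitch covering
  let q : Besicovitch.BallPackage E (EuclideanSpace ℝ (Fin n)) :=
    ⟨Subtype.val, r, hr0, a, hra⟩
  obtain ⟨s, hs_disj, hs_cov⟩ := Besicovitch.exist_disjoint_covering_families hτ₀ hSC q
  have hEcov : E ⊆ ⋃ i, ⋃ j ∈ s i, ball (j : EuclideanSpace ℝ (Fin n)) (r j) := by
    intro x hx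
    have : x ∈ Set.range q.c := by
      rw [show Set.range q.c = E from Subtype.range_val]; exact hx
    exact hs_cov this
  have count : ∀ i, (s i).Countable := by
    intro i
    refine (hs_disj i).countable_of_nonempty_interior fun j _ => ?_
    refine ⟨(j : EuclideanSpace ℝ (Fin n)), ?_⟩
    exact interior_mono ball_subset_closedBall
      (by rw [isOpen_ball.interior_eq]; exact mem_ball_self (hr0 j))
  have hball_disj : ∀ i, (s i).PairwiseDisjoint
      fun j : E => ball (j : EuclideanSpace ℝ (Fin n)) (r j) := by
    intro i
    exact (hs_disj i).mono fun j => ball_subset_closedBall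
  -- measure with density |f|
  set ν : Measure (EuclideanSpace ℝ (Fin n)) :=
    γ.withDensity fun y => ENNReal.ofReal |f y| with hν
  have hνball : ∀ j : E, ν (ball (j : EuclideanSpace ℝ (Fin n)) (r j)) =
      ∫⁻ y in ball (j : EuclideanSpace ℝ (Fin n)) (r j), ENNReal.ofReal |f y| ∂γ := by
    intro j; rw [hν, withDensity_apply _ measurableSet_ball]
  have hνuniv : ν Set.univ = I := by
    rw [hν, withDensity_apply _ MeasurableSet.univ, Measure.restrict_univ, hI]
  -- the chain of estimates
  have step1 : ENNReal.ofReal τ * γ E ≤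
      ∑ i : Fin N, ∑' j : s i, ENNReal.ofReal τ *
        γ (ball ((j : E) : EuclideanSpace ℝ (Fin n)) (r j)) := by
    calc ENNReal.ofReal τ * γ E
        ≤ ENNReal.ofReal τ *
          γ (⋃ i, ⋃ j ∈ s i, ball (j : EuclideanSpace ℝ (Fin n)) (r j)) :=
          mul_le_mul_right (measure_mono hEcov) _
      _ ≤ ENNReal.ofReal τ *
          ∑ i : Fin N, γ (⋃ j ∈ s i, ball (j : EuclideanSpace ℝ (Fin n)) (r j)) :=
          mul_le_mul_right (measure_iUnion_fintype_le _ _) _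
      _ ≤ ENNReal.ofReal τ *
          ∑ i : Fin N, ∑' j : s i, γ (ball ((j : E) : EuclideanSpace ℝ (Fin n)) (r j)) := by
          refine mul_le_mul_right (Finset.sum_le_sum fun i _ => ?_) _
          exact measure_biUnion_le γ (count i) _
      _ = ∑ i : Fin N, ∑' j : s i, ENNReal.ofReal τ *
            γ (ball ((j : E) : EuclideanSpace ℝ (Fin n)) (r j)) := by
          rw [Finset.mul_sum]
          exact Finset.sum_congr rfl fun i _ => ENNReal.tsum_mul_left.symm
  have step2 : ∀ i : Fin N, (∑' j : s i, ENNReal.ofReal τ *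
      γ (ball ((j : E) : EuclideanSpace ℝ (Fin n)) (r j))) ≤ I := by
    intro i
    calc (∑' j : s i, ENNReal.ofReal τ *
          γ (ball ((j : E) : EuclideanSpace ℝ (Fin n)) (r j)))
        ≤ ∑' j : s i, ν (ball ((j : E) : EuclideanSpace ℝ (Fin n)) (r j)) := by
          refine ENNReal.tsum_le_tsum fun j => ?_
          rw [hνball]; exact hrI (j : E)
      _ = ν (⋃ j ∈ s i, ball (j : EuclideanSpace ℝ (Fin n)) (r j)) :=
          (measure_biUnion (count i) (hball_disj i) fun j _ => measurableSet_ball).symm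
      _ ≤ ν Set.univ := measure_mono (Set.subset_univ _)
      _ = I := hνuniv
  have step3 : ENNReal.ofReal τ * γ E ≤ (N : ℝ≥0∞) * I := by
    refine step1.trans ?_
    calc (∑ i : Fin N, ∑' j : s i, ENNReal.ofReal τ *
          γ (ball ((j : E) : EuclideanSpace ℝ (Fin n)) (r j)))
        ≤ ∑ _i : Fin N, I := Finset.sum_le_sum fun i _ => step2 i
      _ = (N : ℝ≥0∞) * I := by simp [Finset.sum_const, nsmul_eq_mul]
  refine step3.trans ?_
  have hint_nonneg : 0 ≤ ∫ x, |f x| ∂γ := integral_nonneg fun x => abs_nonneg _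
  rw [ENNReal.ofReal_mul (by positivity), ← hI_eq]
  gcongr
  · rw [show ((N : ℝ) + 1) = ((N + 1 : ℕ) : ℝ) by push_cast; ring,
      ENNReal.ofReal_natCast]
    exact_mod_cast Nat.le_succ N

end
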